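/- In every valid Septoku board, the values of the six corner cells 1, 4, 16, 22, 34, 37 together with the central cell 19 are pairwise distinct (equivalently, all seven symbols appear among the six corners and the center). -/

import Mathlib

/-- Cell `n` (numbered 1 through 37) of the Septoku board, as an element of `Fin 37`. -/
def cell (n : ℕ) : Fin 37 := ⟨(n - 1) % 37, Nat.mod_lt _ (by norm_num)⟩

/-- The set of cells with the given (1-based) numbers. -/
def cells (l : List ℕ) : Finset (Fin 37) := (l.map cell).toFinset

/-- The 21 rows of the Septoku board (7 horizontal and 7 in each diagonal direction). -/
def septokuRows : List (Finset (Fin 37)) :=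
  [cells [1,2,3,4], cells [5,6,7,8,9], cells [10,11,12,13,14,15],
   cells [16,17,18,19,20,21,22], cells [23,24,25,26,27,28],
   cells [29,30,31,32,33], cells [34,35,36,37],
   cells [1,5,10,16], cells [2,6,11,17,23], cells [3,7,12,18,24,29],
   cells [4,8,13,19,25,30,34], cells [9,14,20,26,31,35],
   cells [15,21,27,32,36], cells [22,28,33,37],
   cells [4,9,15,22], cells [3,8,14,21,28], cells [2,7,13,20,27,33],
   cells [1,6,12,19,26,32,37], cells [5,11,18,25,31,36],
   cells [10,17,24,30,35], cells [16,23,29,34]]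

/-- The 7 circular regions of the Septoku board (centered at cells 6,8,17,19,21,30,32). -/
def septokuCircles : List (Finset (Fin 37)) :=
  [cells [1,2,5,6,7,11,12], cells [3,4,7,8,9,13,14],
   cells [10,11,16,17,18,23,24], cells [12,13,18,19,20,25,26],
   cells [14,15,20,21,22,27,28], cells [24,25,29,30,31,34,35],
   cells [26,27,31,32,33,36,37]]

/-- A valid Septoku board: a function from the 37 cells to the 7 symbols that is
injective on each of the 21 rows and attains all seven symbols on each circle. -/
def IsSeptoku (f : Fin 37 → Fin 7) : Prop :=
  (∀ R ∈ septokuRows, Set.InjOn f ↑R) ∧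
  (∀ C ∈ septokuCircles, ∀ v : Fin 7, ∃ x ∈ C, f x = v)

namespace SeptokuAux

def orderL : List Nat := [1, 2, 5, 6, 7, 11, 12, 3, 13, 14, 4, 8, 9, 15, 10, 18, 20, 25, 26, 19, 24, 31, 27, 28, 23, 29, 35, 17, 16, 33, 36, 21, 32, 30, 37, 34, 22]

def tbl : List (List Nat) := [[], [0], [0, 1], [0, 1, 2], [0, 1, 2, 3], [0, 1, 2, 3, 4], [0, 1, 2, 3, 4, 5], [0, 1, 4, 6], [1, 4, 5, 6, 7], [4, 5, 6, 7, 8], [0, 1, 4, 7, 8, 9], [2, 3, 4, 7, 8, 9, 10], [2, 3, 4, 7, 8, 9, 10, 11], [5, 6, 8, 9, 10, 12], [0, 2, 5, 6, 8, 9, 13], [2, 4, 5, 6, 7, 8, 14], [1, 4, 6, 8, 9, 12, 13, 15], [2, 5, 6, 8, 10, 11, 15, 16], [0, 3, 6, 8, 9, 12, 15, 16, 17], [0, 3, 6, 8, 10, 11, 15, 16, 17, 18], [4, 5, 6, 7, 14, 15, 17, 18], [2, 5, 9, 12, 15, 16, 17, 18, 20], [1, 4, 8, 9, 13, 16, 17,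 18, 20, 21], [7, 9, 11, 13, 16, 17, 18, 20, 22], [1, 3, 5, 14, 15, 17, 18, 20, 22, 23], [4, 6, 7, 15, 17, 20, 21, 24], [9, 12, 14, 16, 17, 18, 20, 21, 25], [1, 3, 5, 14, 15, 16, 19, 20, 24, 26], [0, 2, 5, 14, 15, 16, 19, 20, 24, 25, 27], [1, 4, 8, 16, 18, 21, 22, 23, 25], [2, 5, 13, 15, 17, 18, 21, 22, 26, 29], [7, 9, 11, 13, 15, 16, 19, 22, 23, 27, 28, 30], [0, 3, 6, 13, 18, 19, 21, 22, 25, 29, 30, 31], [8, 10, 11, 14, 17, 19, 20, 21, 25, 26, 27, 29, 32], [0, 3, 6, 18, 19, 21, 22, 23, 26, 29, 30, 32], [8, 10, 11, 17, 19, 20, 21, 24, 25, 26, 28, 30, 33, 34], [9, 10, 12, 13, 15, 16, 19, 22, 23, 27, 28, 29, 31, 34]]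

def cornerPos : List Nat := [0, 10, 28, 36, 35, 34, 19]

def groupsL : List (List ℕ) :=
  [[1,2,3,4],[5,6,7,8,9],[10,11,12,13,14,15],[16,17,18,19,20,21,22],
   [23,24,25,26,27,28],[29,30,31,32,33],[34,35,36,37],
   [1,5,10,16],[2,6,11,17,23],[3,7,12,18,24,29],[4,8,13,19,25,30,34],
   [9,14,20,26,31,35],[15,21,27,32,36],[22,28,33,37],
   [4,9,15,22],[3,8,14,21,28],[2,7,13,20,27,33],[1,6,12,19,26,32,37],
   [5,11,18,25,31,36],[10,17,24,30,35],[16,23,29,34],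
   [1,2,5,6,7,11,12],[3,4,7,8,9,13,14],[10,11,16,17,18,23,24],
   [12,13,18,19,20,25,26],[14,15,20,21,22,27,28],[24,25,29,30,31,34,35],
   [26,27,31,32,33,36,37]]

def sameGroupB (a b : ℕ) : Bool := groupsL.any fun G => decide (a ∈ G) && decide (b ∈ G)

def chk (k p v : ℕ) : Bool := (tbl.getD k []).all fun j => p / 8^j % 8 != v

def searchF : ℕ → ℕ → ℕ → Bool
  | 0, _, p => decide (List.Pairwise (· ≠ ·) (cornerPos.map fun j => p / 8^j % 8))
  | n+1, k, p => (List.range 7).all fun v =>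
      if chk k p v then searchF n (k+1) (p + 8^k * v) else true

set_option maxHeartbeats 40000000 in
theorem key : searchF 30 7 1754760 = true := by decide

def tblOKb : Bool := (List.range 37).all fun k => (tbl.getD k []).all fun j =>
  decide (j < k) && decide (cell (orderL.getD j 0) ≠ cell (orderL.getD k 0))
    && sameGroupB (orderL.getD j 0) (orderL.getD k 0)

theorem tblOK : tblOKb = true := by decide

theorem sameGroup_spec {a b : ℕ} (h : sameGroupB a b = true) :
    ∃ G ∈ groupsL, a ∈ G ∧ b ∈ G := by
  simp only [sameGroupB, List.any_eq_true, Bool.and_eq_true, decide_eq_true_eq] at h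
  exact h

theorem digit_lt (p v k i : ℕ) (h : i < k) :
    (p + 8^k * v) / 8^i % 8 = p / 8^i % 8 := by
  have e1 : 8^k * v = 8^i * (8^(k-i) * v) := by
    rw [← mul_assoc, ← pow_add]; congr 2; omega
  rw [e1, Nat.add_mul_div_left _ _ (pow_pos (by norm_num) i)]
  obtain ⟨m, hm⟩ : ∃ m, k - i = m + 1 := ⟨k - i - 1, by omega⟩
  rw [hm, pow_succ]
  have e2 : 8^m * 8 * v = 8 * (8^m * v) := by ring
  rw [e2, Nat.add_mul_mod_self_left]

theorem digit_eq (p v k : ℕ) (hp : p < 8^k) (hv : v < 8) :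
    (p + 8^k * v) / 8^k % 8 = v := by
  rw [Nat.add_mul_div_left _ _ (pow_pos (by norm_num) k), Nat.div_eq_of_lt hp,
    Nat.zero_add, Nat.mod_eq_of_lt hv]

theorem digit_bound (p v k : ℕ) (hp : p < 8^k) (hv : v < 8) :
    p + 8^k * v < 8^(k+1) := by
  have h : (8:ℕ)^(k+1) = 8^k * 8 := pow_succ 8 k
  nlinarith

theorem sound (g : Fin 37 → Fin 7)
    (hg : ∀ a b : ℕ, sameGroupB a b = true → cell a ≠ cell b → g (cell a) ≠ g (cell b)) :
    ∀ n k p, k + n = 37 → p < 8^k →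
      (∀ i, i < k → p / 8^i % 8 = (g (cell (orderL.getD i 0))).val) →
      searchF n k p = true →
      List.Pairwise (· ≠ ·) (([1,4,16,22,34,37,19] : List ℕ).map fun c => g (cell c)) := by
  intro n
  induction n with
  | zero =>
    intro k p hk hp hinv hs
    unfold searchF at hs
    have hpw := of_decide_eq_true hs
    have e0 := hinv 0 (by omega)
    have e10 := hinv 10 (by omega)
    have e28 := hinv 28 (by omega)
    have e36 := hinv 36 (by omega)
    have e35 := hinv 35 (by omega)
    have e34 := hinv 34 (by omega)
    have e19 := hinv 19 (by omega)
    rw [show orderL.getD 0 0 = 1 from rfl] at e0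
    rw [show orderL.getD 10 0 = 4 from rfl] at e10
    rw [show orderL.getD 28 0 = 16 from rfl] at e28
    rw [show orderL.getD 36 0 = 22 from rfl] at e36
    rw [show orderL.getD 35 0 = 34 from rfl] at e35
    rw [show orderL.getD 34 0 = 37 from rfl] at e34
    rw [show orderL.getD 19 0 = 19 from rfl] at e19
    have hl : cornerPos.map (fun j => p / 8^j % 8)
        = ([1,4,16,22,34,37,19] : List ℕ).map (fun c => (g (cell c)).val) := by
      rw [show cornerPos = [0,10,28,36,35,34,19] from rfl]
      simp only [List.map_cons, List.map_nil]
      rw [e0, e10, e28, e36, e35, e34, e19]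
    rw [hl, List.pairwise_map] at hpw
    rw [List.pairwise_map]
    exact hpw.imp fun h hc => h (by rw [hc])
  | succ n ih =>
    intro k p hk hp hinv hs
    have hk37 : k < 37 := by omega
    unfold searchF at hs
    rw [List.all_eq_true] at hs
    have hvlt : ((g (cell (orderL.getD k 0))).val) < 7 := (g _).isLt
    have hbranch := hs _ (List.mem_range.mpr hvlt)
    have hchk : chk k p (g (cell (orderL.getD k 0))).val = true := by
      unfold chk
      rw [List.all_eq_true]
      intro j hj
      have h1 := (List.all_eq_true.mp tblOK) k (List.mem_range.mpr hk37)
      have h2 := (List.all_eq_true.mp h1) j hj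
      simp only [Bool.and_eq_true, decide_eq_true_eq] at h2
      obtain ⟨⟨hjk, hne⟩, hsg⟩ := h2
      have hiv := hinv j hjk
      have hgne := hg (orderL.getD j 0) (orderL.getD k 0) hsg hne
      rw [bne_iff_ne, hiv]
      intro hEq
      exact hgne (Fin.val_injective hEq)
    rw [hchk, if_pos rfl] at hbranch
    apply ih (k+1) _ (by omega) (digit_bound p _ k hp (by omega)) ?_ hbranch
    intro i hi
    rcases Nat.lt_or_ge i k with h | h
    · rw [digit_lt p _ k i h]; exact hinv i h
    · have hik : i = k := by omega
      subst hik
      rw [digit_eq p _ i hp (by omega)]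

theorem circle_injOn (g : Fin 37 → Fin 7) (C : Finset (Fin 37)) (hcard : C.card = 7)
    (hsurj : ∀ v : Fin 7, ∃ x ∈ C, g x = v) : Set.InjOn g ↑C := by
  have himg : C.image g = Finset.univ :=
    Finset.eq_univ_iff_forall.mpr fun v => Finset.mem_image.mpr
      (let ⟨x, hx, he⟩ := hsurj v; ⟨x, hx, he⟩)
  have hcc : (C.image g).card = C.card := by
    rw [himg, hcard, Finset.card_univ]; rfl
  exact Finset.card_image_iff.mp hcc

theorem groups_inj (g : Fin 37 → Fin 7) (hg : IsSeptoku g) :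
    ∀ G ∈ groupsL, Set.InjOn g ↑(cells G) := by
  intro G hG
  fin_cases hG
  · exact hg.1 _ (by simp [septokuRows])
  · exact hg.1 _ (by simp [septokuRows])
  · exact hg.1 _ (by simp [septokuRows])
  · exact hg.1 _ (by simp [septokuRows])
  · exact hg.1 _ (by simp [septokuRows])
  · exact hg.1 _ (by simp [septokuRows])
  · exact hg.1 _ (by simp [septokuRows])
  · exact hg.1 _ (by simp [septokuRows])
  · exact hg.1 _ (by simp [septokuRows])
  · exact hg.1 _ (by simp [septokuRows])
  · exact hg.1 _ (by simp [septokuRows])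
  · exact hg.1 _ (by simp [septokuRows])
  · exact hg.1 _ (by simp [septokuRows])
  · exact hg.1 _ (by simp [septokuRows])
  · exact hg.1 _ (by simp [septokuRows])
  · exact hg.1 _ (by simp [septokuRows])
  · exact hg.1 _ (by simp [septokuRows])
  · exact hg.1 _ (by simp [septokuRows])
  · exact hg.1 _ (by simp [septokuRows])
  · exact hg.1 _ (by simp [septokuRows])
  · exact hg.1 _ (by simp [septokuRows])
  · exact circle_injOn g _ (by decide) (hg.2 _ (by simp [septokuCircles]))
  · exact circle_injOn g _ (by decide) (hg.2 _ (by simp [septokuCircles]))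
  · exact circle_injOn g _ (by decide) (hg.2 _ (by simp [septokuCircles]))
  · exact circle_injOn g _ (by decide) (hg.2 _ (by simp [septokuCircles]))
  · exact circle_injOn g _ (by decide) (hg.2 _ (by simp [septokuCircles]))
  · exact circle_injOn g _ (by decide) (hg.2 _ (by simp [septokuCircles]))
  · exact circle_injOn g _ (by decide) (hg.2 _ (by simp [septokuCircles]))

end SeptokuAux

open SeptokuAux in
/-- In every valid Septoku board, the values of the six corner cells 1, 4, 16, 22, 34, 37
together with the central cell 19 are pairwise distinct. -/
theorem septoku_corners_center_distinct (f : Fin 37 → Fin 7) (hf : IsSeptoku f) :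
    (([1, 4, 16, 22, 34, 37, 19] : List ℕ).map (fun n => f (cell n))).Pairwise (· ≠ ·) := by
  classical
  have hsurj : Function.Surjective
      (fun i : Fin 7 => f (cell (([1,2,5,6,7,11,12] : List ℕ).getD i.val 0))) := by
    intro v
    obtain ⟨x, hx, hfx⟩ := hf.2 (cells [1,2,5,6,7,11,12]) (by simp [septokuCircles]) v
    simp only [cells, List.mem_toFinset, List.mem_map] at hx
    obtain ⟨a, ha, rfl⟩ := hx
    fin_cases ha
    · exact ⟨⟨0, by norm_num⟩, hfx⟩
    · exact ⟨⟨1, by norm_num⟩, hfx⟩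
    · exact ⟨⟨2, by norm_num⟩, hfx⟩
    · exact ⟨⟨3, by norm_num⟩, hfx⟩
    · exact ⟨⟨4, by norm_num⟩, hfx⟩
    · exact ⟨⟨5, by norm_num⟩, hfx⟩
    · exact ⟨⟨6, by norm_num⟩, hfx⟩
  have hbij := Finite.surjective_iff_bijective.mp hsurj
  obtain ⟨e, he0, he1, he2, he3, he4, he5, he6⟩ :
      ∃ e : Fin 7 ≃ Fin 7, e 0 = f (cell 1) ∧ e 1 = f (cell 2) ∧ e 2 = f (cell 5) ∧
        e 3 = f (cell 6) ∧ e 4 = f (cell 7) ∧ e 5 = f (cell 11) ∧ e 6 = f (cell 12) :=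
    ⟨Equiv.ofBijective _ hbij, rfl, rfl, rfl, rfl, rfl, rfl, rfl⟩
  have h0 : e.symm (f (cell 1)) = 0 := by rw [← he0]; exact e.symm_apply_apply 0
  have h1 : e.symm (f (cell 2)) = 1 := by rw [← he1]; exact e.symm_apply_apply 1
  have h2 : e.symm (f (cell 5)) = 2 := by rw [← he2]; exact e.symm_apply_apply 2
  have h3 : e.symm (f (cell 6)) = 3 := by rw [← he3]; exact e.symm_apply_apply 3
  have h4 : e.symm (f (cell 7)) = 4 := by rw [← he4]; exact e.symm_apply_apply 4
  have h5 : e.symm (f (cell 11)) = 5 := by rw [← he5]; exact e.symm_apply_apply 5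
  have h6 : e.symm (f (cell 12)) = 6 := by rw [← he6]; exact e.symm_apply_apply 6
  have hgSept : IsSeptoku (fun x => e.symm (f x)) := by
    constructor
    · intro R hR x hx y hy hxy
      exact hf.1 R hR hx hy (e.symm.injective hxy)
    · intro C hC v
      obtain ⟨x, hx, hfx⟩ := hf.2 C hC (e v)
      exact ⟨x, hx, by simp [hfx]⟩
  have hg : ∀ a b : ℕ, sameGroupB a b = true → cell a ≠ cell b →
      (fun x => e.symm (f x)) (cell a) ≠ (fun x => e.symm (f x)) (cell b) := by
    intro a b hsg hne hEq
    obtain ⟨G, hG, ha, hb⟩ := sameGroup_spec hsg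
    have hinj := groups_inj (fun x => e.symm (f x)) hgSept G hG
    exact hne (hinj (by simp only [Finset.coe_insert, Set.mem_insert_iff, cells,
        List.coe_toFinset, Set.mem_setOf_eq, List.mem_map]; exact ⟨a, ha, rfl⟩)
      (by simp only [Finset.coe_insert, Set.mem_insert_iff, cells,
        List.coe_toFinset, Set.mem_setOf_eq, List.mem_map]; exact ⟨b, hb, rfl⟩) hEq)
  have hinit : ∀ i, i < 7 →
      1754760 / 8^i % 8 = ((fun x => e.symm (f x)) (cell (orderL.getD i 0))).val := by
    intro i hi
    interval_cases i
    · rw [show orderL.getD 0 0 = 1 from rfl]; simp only; rw [h0]; decide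
    · rw [show orderL.getD 1 0 = 2 from rfl]; simp only; rw [h1]; decide
    · rw [show orderL.getD 2 0 = 5 from rfl]; simp only; rw [h2]; decide
    · rw [show orderL.getD 3 0 = 6 from rfl]; simp only; rw [h3]; decide
    · rw [show orderL.getD 4 0 = 7 from rfl]; simp only; rw [h4]; decide
    · rw [show orderL.getD 5 0 = 11 from rfl]; simp only; rw [h5]; decide
    · rw [show orderL.getD 6 0 = 12 from rfl]; simp only; rw [h6]; decide
  have hkey := sound (fun x => e.symm (f x)) hg 30 7 1754760 (by norm_num) (by norm_num)
    hinit key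
  rw [List.pairwise_map] at hkey ⊢
  exact hkey.imp fun h hc => h (by rw [hc])
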